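/- arXiv:2008.02299 — 3 statements merged into one kernel-verified Lean document; each statement's English description precedes it below -/
import Mathlib

section
/- Let n ≥ 1 and let 0 = x₀ < x₁ < ⋯ < x_n = 1 be real numbers. Suppose that for every pair of indices 0 ≤ i, j ≤ n−1 we are given an affine function g_{i,j} : ℝ → ℝ (i.e. of the form g_{i,j}(x) = c·x + d) such that: (a) the cocycle condition g_{i,j} + g_{j,k} = g_{i,k} holds for all 0 ≤ i, j, k ≤ n−1; (b) whenever i ≤ j, one has g_{i,j}(x) ≤ 0 for all x ∈ [x_i, x_{i+1}] and g_{i,j}(x) ≥ 0 for all x ∈ [x_j, x_{j+1}]. If g_{0,n−1} is identically zero, then g_{0,i} is identically zero for every 0 ≤ i ≤ n−1. -/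
/-- Combinatorial core of Theorem 2.12: a cocycle of affine functions on `[0,1]`,
nonpositive on the `i`-th subinterval and nonnegative on the `j`-th for `i ≤ j`,
with `g 0 (n-1)` identically zero, forces all `g 0 i` to vanish identically. -/
theorem stmt_0 (n : ℕ) (hn : 1 ≤ n) (x : ℕ → ℝ)
    (hx0 : x 0 = 0) (hxn : x n = 1)
    (hxlt : ∀ i < n, x i < x (i + 1))
    (g : ℕ → ℕ → ℝ → ℝ)
    (haff : ∀ i < n, ∀ j < n, ∃ c d : ℝ, ∀ t : ℝ, g i j t = c * t + d)
    (hcoc : ∀ i < n, ∀ j < n, ∀ k < n, ∀ t : ℝ, g i j t + g j k t = g i k t)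
    (hneg : ∀ i j, i < n → j < n → i ≤ j →
      ∀ t ∈ Set.Icc (x i) (x (i + 1)), g i j t ≤ 0)
    (hpos : ∀ i j, i < n → j < n → i ≤ j →
      ∀ t ∈ Set.Icc (x j) (x (j + 1)), 0 ≤ g i j t)
    (hzero : ∀ t : ℝ, g 0 (n - 1) t = 0) :
    ∀ i < n, ∀ t : ℝ, g 0 i t = 0 := by
  have hmono : ∀ i j, i ≤ j → j ≤ n → x i ≤ x j := by
    intro i j hij hjn
    induction j with
    | zero => simp at hij; simp [hij]
    | succ m ih =>
      rcases Nat.eq_or_lt_of_le hij with h | h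
      · exact le_of_eq (by rw [h])
      · exact (ih (Nat.lt_succ_iff.mp h) (le_trans (Nat.le_succ m) hjn)).trans
          (hxlt m (by omega)).le
  intro i hi t
  obtain ⟨c, d, hcd⟩ := haff 0 hn i hi
  have hin : i ≤ n - 1 := by omega
  have hn1 : n - 1 < n := by omega
  -- g 0 i 0 ≤ 0
  have h1 : g 0 i 0 ≤ 0 := by
    apply hneg 0 i hn hi (Nat.zero_le i) 0
    constructor
    · rw [hx0]
    · rw [← hx0]; exact (hxlt 0 hn).le
  -- g 0 i 1 ≤ 0
  have h2 : g 0 i 1 ≤ 0 := by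
    have hc := hcoc 0 hn i hi (n - 1) hn1 1
    have hp : 0 ≤ g i (n - 1) 1 := by
      apply hpos i (n - 1) hi hn1 hin 1
      constructor
      · rw [← hxn]
        have : n - 1 + 1 = n := by omega
        rw [← this]
        exact (hxlt (n - 1) hn1).le
      · rw [← hxn]
        have : n - 1 + 1 = n := by omega
        rw [this]
    rw [hzero 1] at hc
    linarith
  -- g 0 i ≥ 0 at x i and x (i+1)
  have h3 : 0 ≤ g 0 i (x i) :=
    hpos 0 i hn hi (Nat.zero_le i) (x i) ⟨le_refl _, (hxlt i hi).le⟩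
  have h4 : 0 ≤ g 0 i (x (i + 1)) :=
    hpos 0 i hn hi (Nat.zero_le i) (x (i + 1)) ⟨(hxlt i hi).le, le_refl _⟩
  have hA0 : (0 : ℝ) ≤ x i := by rw [← hx0]; exact hmono 0 i (Nat.zero_le i) (le_of_lt hi)
  have hB1 : x (i + 1) ≤ 1 := by rw [← hxn]; exact hmono (i + 1) n hi (le_refl n)
  have hAB : x i < x (i + 1) := hxlt i hi
  rw [hcd] at h1 h2 h3 h4 ⊢
  have hd : d ≤ 0 := by linarith [h1]
  have hcd1 : c + d ≤ 0 := by linarith [h2]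
  have hA1 : x i ≤ 1 := le_trans hAB.le hB1
  have hB0 : (0 : ℝ) ≤ x (i + 1) := le_trans hA0 hAB.le
  -- affine ≤ 0 on [0,1]: c * A + d ≤ 0
  have hAle : c * x i + d ≤ 0 := by nlinarith [mul_nonneg hA0 (neg_nonneg.mpr hcd1)]
  have hBle : c * x (i + 1) + d ≤ 0 := by nlinarith [mul_nonneg hB0 (neg_nonneg.mpr hcd1)]
  have hAeq : c * x i + d = 0 := le_antisymm hAle h3
  have hBeq : c * x (i + 1) + d = 0 := le_antisymm hBle h4
  have hc0 : c = 0 := by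
    have : c * (x (i + 1) - x i) = 0 := by linear_combination hBeq - hAeq
    rcases mul_eq_zero.mp this with h | h
    · exact h
    · exact absurd h (by linarith)
  have hd0 : d = 0 := by rw [hc0] at hAeq; linarith
  rw [hc0, hd0]; ring
end

section
/- Let T be a finite tree (a finite connected acyclic simple graph) with vertex set V, let B ⊆ V and fix a vertex r ∈ B. Let F : V → ℝ be a function such that: (i) for every v ∈ V \ B, F is superharmonic at v, i.e. ∑_{w ∈ N(v)} (F(w) − F(v)) ≤ 0; and (ii) for every v ∈ B with v ≠ r and every neighbor w ∈ N(v), one has F(w) ≤ F(v). Then F is non-decreasing along every simple path starting at r: if r = v₀, v₁, …, v_k are pairwise distinct vertices with v_j adjacent to v_{j+1} for each 0 ≤ j < k, then F(v₀) ≤ F(v₁) ≤ ⋯ ≤ F(v_k). In particular, F attains its minimum over V at r. -/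
open Finset SimpleGraph

section Aux

variable {V : Type*} [DecidableEq V] {G : SimpleGraph V}

/-- In a tree, every path has length equal to the distance between its endpoints. -/
private lemma tree_path_length (hT : G.IsTree) {u v : V} (p : G.Walk u v) (hp : p.IsPath) :
    p.length = G.dist u v := by
  obtain ⟨q, hq, hlen⟩ := hT.isConnected.exists_path_of_dist u v
  rw [(hT.existsUnique_path u v).unique hp hq]
  exact hlen

/-- In a tree, adjacent vertices have distances (from a fixed root) differing by one. -/
private lemma tree_adj_dist (hT : G.IsTree) (r : V) {a b : V} (h : G.Adj a b) :
    G.dist r a + 1 = G.dist r b ∨ G.dist r b + 1 = G.dist r a := by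
  obtain ⟨p, hp, hl⟩ := hT.isConnected.exists_path_of_dist r a
  by_cases hb : b ∈ p.support
  · right
    have ht : (p.takeUntil b hb).length = G.dist r b :=
      tree_path_length hT _ (hp.takeUntil hb)
    have hd : (p.dropUntil b hb).length = G.dist b a :=
      tree_path_length hT _ (hp.dropUntil hb)
    have hsum : (p.takeUntil b hb).length + (p.dropUntil b hb).length = p.length := by
      rw [← Walk.length_append, Walk.take_spec]
    have hba : G.dist b a = 1 := dist_eq_one_iff_adj.mpr h.symm
    omega
  · left
    have hc : (p.concat h).IsPath := by
      rw [← Walk.isPath_reverse_iff, Walk.reverse_concat]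
      exact (p.isPath_reverse_iff.mpr hp).cons (by simpa using hb)
    have := tree_path_length hT _ hc
    rwa [Walk.length_concat, hl] at this

/-- In a tree, the parent (the neighbor one step closer to the root) is unique. -/
private lemma tree_parent_unique (hT : G.IsTree) (r : V) {a a' b : V}
    (h : G.Adj a b) (h' : G.Adj a' b)
    (hd : G.dist r a + 1 = G.dist r b) (hd' : G.dist r a' + 1 = G.dist r b) :
    a = a' := by
  obtain ⟨p, hp, hl⟩ := hT.isConnected.exists_path_of_dist r a
  obtain ⟨p', hp', hl'⟩ := hT.isConnected.exists_path_of_dist r a'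
  have key : ∀ {c : V} (q : G.Walk r c), q.IsPath → q.length = G.dist r c →
      G.dist r c + 1 = G.dist r b → b ∉ q.support := by
    intro c q hq hql hqd hb
    have ht : (q.takeUntil b hb).length = G.dist r b :=
      tree_path_length hT _ (hq.takeUntil hb)
    have hsum : (q.takeUntil b hb).length + (q.dropUntil b hb).length = q.length := by
      rw [← Walk.length_append, Walk.take_spec]
    omega
  have hb : b ∉ p.support := key p hp hl hd
  have hb' : b ∉ p'.support := key p' hp' hl' hd'
  have hc : (p.concat h).IsPath := by
    rw [← Walk.isPath_reverse_iff, Walk.reverse_concat]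
    exact (p.isPath_reverse_iff.mpr hp).cons (by simpa using hb)
  have hc' : (p'.concat h').IsPath := by
    rw [← Walk.isPath_reverse_iff, Walk.reverse_concat]
    exact (p'.isPath_reverse_iff.mpr hp').cons (by simpa using hb')
  have heq : p.concat h = p'.concat h' := (hT.existsUnique_path r b).unique hc hc'
  obtain ⟨hv, -⟩ := Walk.concat_inj heq
  exact hv

end Aux

/-- Discrete analogue of Lemma 6.4: on a finite tree, a function superharmonic off `B`
whose values do not increase towards the vertices of `B ∖ {r}` is non-decreasing along
every simple path from `r`, and attains its minimum at `r`. -/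
theorem stmt_3 {V : Type*} [Fintype V]
    (G : SimpleGraph V) [DecidableRel G.Adj] (hT : G.IsTree)
    (B : Set V) (r : V) (hr : r ∈ B) (F : V → ℝ)
    (hsup : ∀ v ∉ B, ∑ w ∈ G.neighborFinset v, (F w - F v) ≤ 0)
    (hB : ∀ v ∈ B, v ≠ r → ∀ w ∈ G.neighborFinset v, F w ≤ F v) :
    (∀ (u : V) (p : G.Walk r u), p.IsPath →
      List.Chain' (fun a b => F a ≤ F b) p.support) ∧
    (∀ u : V, F r ≤ F u) := by
  classical
  have hdlt : ∀ v : V, G.dist r v < Fintype.card V := by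
    intro v
    obtain ⟨p, hp, hl⟩ := hT.isConnected.exists_path_of_dist r v
    rw [← hl]; exact hp.length_lt
  -- main step: F is nondecreasing along any edge going away from r
  have main : ∀ (n : ℕ) (b a : V), Fintype.card V - G.dist r b ≤ n →
      G.Adj a b → G.dist r a + 1 = G.dist r b → F a ≤ F b := by
    intro n
    induction n with
    | zero =>
      intro b a hn _ _
      have := hdlt b
      omega
    | succ n ih =>
      intro b a hn hab hdab
      by_cases hbB : b ∈ B
      · have hbr : b ≠ r := by
          intro hbr
          rw [hbr] at hdab
          have h0 : G.dist r r = 0 := by simp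
          omega
        exact hB b hbB hbr a (by rwa [mem_neighborFinset, adj_comm])
      · have hsum := hsup b hbB
        have ha : a ∈ G.neighborFinset b := by rwa [mem_neighborFinset, adj_comm]
        rw [← Finset.add_sum_erase _ _ ha] at hsum
        have hpos : 0 ≤ ∑ w ∈ (G.neighborFinset b).erase a, (F w - F b) := by
          apply Finset.sum_nonneg
          intro w hw
          obtain ⟨hwa, hwN⟩ := Finset.mem_erase.mp hw
          have hbw : G.Adj b w := (mem_neighborFinset _ _ _).mp hwN
          rcases tree_adj_dist hT r hbw.symm with hcase | hcase
          · exact absurd (tree_parent_unique hT r hbw.symm hab hcase hdab) hwa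
          · have hle : F b ≤ F w := by
              apply ih w b _ hbw hcase
              have := hdlt w
              omega
            linarith
        linarith
  -- along a path from r, consecutive vertices are adjacent and go away from r
  have chainD : ∀ (v u : V) (p : G.Walk v u) (q : G.Walk r v),
      (q.append p).IsPath →
      List.Chain' (fun a b => G.Adj a b ∧ G.dist r a + 1 = G.dist r b) p.support := by
    intro v u p
    induction p with
    | nil => intro q _; exact List.isChain_singleton _
    | @cons v w u h p' ih =>
      intro q hpath
      rw [← Walk.concat_append] at hpath
      have hq' : ((q.concat h)).IsPath := hpath.of_append_left
      have hq : q.IsPath := by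
        have := hq'
        rw [Walk.concat_eq_append] at this
        exact this.of_append_left
      have hdv : G.dist r v = q.length := (tree_path_length hT q hq).symm
      have hdw : G.dist r w = q.length + 1 := by
        have := tree_path_length hT _ hq'
        rw [Walk.length_concat] at this
        omega
      have hchain := ih (q.concat h) hpath
      rw [Walk.support_cons, p'.support_eq_cons]
      rw [p'.support_eq_cons] at hchain
      exact List.IsChain.cons_cons ⟨h, by omega⟩ hchain
  have part1 : ∀ (u : V) (p : G.Walk r u), p.IsPath →
      List.Chain' (fun a b => F a ≤ F b) p.support := by
    intro u p hp
    have := chainD r u p Walk.nil (by simpa using hp)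
    refine this.imp ?_
    rintro a b ⟨hadj, hdd⟩
    exact main (Fintype.card V - G.dist r b) b a le_rfl hadj hdd
  refine ⟨part1, ?_⟩
  -- minimum at r, by strong induction on distance
  have part2 : ∀ (n : ℕ) (u : V), G.dist r u ≤ n → F r ≤ F u := by
    intro n
    induction n with
    | zero =>
      intro u hu
      have h0 : G.dist r u = 0 := Nat.le_zero.mp hu
      have : u = r := (hT.isConnected.dist_eq_zero_iff.mp h0).symm
      simp [this]
    | succ n ih =>
      intro u hu
      by_cases hur : u = r
      · simp [hur]
      · obtain ⟨p, hp, hl⟩ := hT.isConnected.exists_path_of_dist r u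
        obtain ⟨a, h, q, hq⟩ := Walk.exists_eq_cons_of_ne hur p.reverse
        have hqpath : q.IsPath := Walk.IsPath.of_cons (by rw [← hq]; exact p.isPath_reverse_iff.mpr hp)
        have hqr : q.reverse.IsPath := q.isPath_reverse_iff.mpr hqpath
        have hda : G.dist r a = q.length := by
          have := tree_path_length hT q.reverse hqr
          rw [Walk.length_reverse] at this
          omega
        have hlen : p.length = q.length + 1 := by
          have : p.reverse.length = q.length + 1 := by rw [hq, Walk.length_cons]
          rwa [Walk.length_reverse] at this
        have hdu : G.dist r u = G.dist r a + 1 := by rw [hda]; omega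
        have h1 : F r ≤ F a := ih a (by omega)
        have h2 : F a ≤ F u :=
          main (Fintype.card V - G.dist r u) u a le_rfl h.symm (by omega)
        linarith
  intro u
  exact part2 (G.dist r u) u le_rfl
end

section
/- Let n ≥ 7 be an integer, let V be a real vector space, and let B be a symmetric bilinear form on V satisfying the Hodge-index property: for every a ∈ V with B(a,a) > 0 and every nonzero b ∈ V with B(a,b) = 0, one has B(b,b) < 0. Then there do not exist vectors D₁, …, D_n ∈ V such that B(D_i, D_i) = −1 for all i, B(D_i, D_j) = 1 whenever i − j ≡ ±1 (mod n), and B(D_i, D_j) = 0 for all other pairs i ≠ j. -/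
/-- First step of Proposition 8.4: a symmetric bilinear form with the Hodge-index
property admits no anticanonical-cycle configuration `D₁, …, D_n` with `n ≥ 7`:
`B(Dᵢ,Dᵢ) = -1`, `B(Dᵢ,Dⱼ) = 1` for cyclically adjacent indices, `0` otherwise. -/
theorem stmt_7 (n : ℕ) (hn : 7 ≤ n) {V : Type*} [AddCommGroup V] [Module ℝ V]
    (B : LinearMap.BilinForm ℝ V) (hsymm : ∀ a b : V, B a b = B b a)
    (hodge : ∀ a : V, 0 < B a a → ∀ b : V, b ≠ 0 → B a b = 0 → B b b < 0) :
    ¬ ∃ D : Fin n → V,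
      (∀ i : Fin n, B (D i) (D i) = -1) ∧
      (∀ i j : Fin n, ((i.val + 1) % n = j.val ∨ (j.val + 1) % n = i.val) →
        B (D i) (D j) = 1) ∧
      (∀ i j : Fin n, i ≠ j →
        ¬((i.val + 1) % n = j.val ∨ (j.val + 1) % n = i.val) →
        B (D i) (D j) = 0) := by
  rintro ⟨D, hdiag, hadj, hoff⟩
  have hm : ∀ m : ℕ, m < 7 → m % n = m := fun m h => Nat.mod_eq_of_lt (by omega)
  -- adjacency helper
  have hadj' : ∀ (x y : ℕ) (hx : x < 7) (hy : y < 7), x + 1 = y →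
      B (D ⟨x, by omega⟩) (D ⟨y, by omega⟩) = 1 := by
    intro x y hx hy h
    apply hadj
    left
    show (x + 1) % n = y
    rw [hm (x + 1) (by omega)]
    exact h
  have hoff' : ∀ (x y : ℕ) (hx : x < 6) (hy : y < 6), x ≠ y →
      ¬(x + 1 = y ∨ y + 1 = x) → B (D ⟨x, by omega⟩) (D ⟨y, by omega⟩) = 0 := by
    intro x y hx hy hne hnadj
    apply hoff _ _ (by simp [Fin.ext_iff]; omega)
    show ¬((x + 1) % n = y ∨ (y + 1) % n = x)
    rw [hm (x + 1) (by omega), hm (y + 1) (by omega)]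
    exact hnadj
  set D0 := D ⟨0, by omega⟩ with hD0
  set D1 := D ⟨1, by omega⟩ with hD1
  set D2 := D ⟨2, by omega⟩ with hD2
  set D3 := D ⟨3, by omega⟩ with hD3
  set D4 := D ⟨4, by omega⟩ with hD4
  set D5 := D ⟨5, by omega⟩ with hD5
  have h00 : B D0 D0 = -1 := hdiag _
  have h11 : B D1 D1 = -1 := hdiag _
  have h22 : B D2 D2 = -1 := hdiag _
  have h44 : B D4 D4 = -1 := hdiag _
  have h55 : B D5 D5 = -1 := hdiag _
  have h01 : B D0 D1 = 1 := hadj' 0 1 (by omega) (by omega) rfl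
  have h12 : B D1 D2 = 1 := hadj' 1 2 (by omega) (by omega) rfl
  have h45 : B D4 D5 = 1 := hadj' 4 5 (by omega) (by omega) rfl
  have h34 : B D3 D4 = 1 := hadj' 3 4 (by omega) (by omega) rfl
  have h02 : B D0 D2 = 0 := hoff' 0 2 (by omega) (by omega) (by omega) (by omega)
  have h04 : B D0 D4 = 0 := hoff' 0 4 (by omega) (by omega) (by omega) (by omega)
  have h05 : B D0 D5 = 0 := hoff' 0 5 (by omega) (by omega) (by omega) (by omega)
  have h14 : B D1 D4 = 0 := hoff' 1 4 (by omega) (by omega) (by omega) (by omega)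
  have h15 : B D1 D5 = 0 := hoff' 1 5 (by omega) (by omega) (by omega) (by omega)
  have h24 : B D2 D4 = 0 := hoff' 2 4 (by omega) (by omega) (by omega) (by omega)
  have h25 : B D2 D5 = 0 := hoff' 2 5 (by omega) (by omega) (by omega) (by omega)
  have h35 : B D3 D5 = 0 := hoff' 3 5 (by omega) (by omega) (by omega) (by omega)
  set a := D0 + D1 + D2 with ha
  set b := D4 + D5 with hb
  have haa : 0 < B a a := by
    have : B a a = 1 := by
      simp only [ha, map_add, LinearMap.add_apply]
      rw [h00, h11, h22, h01, h12, h02, hsymm D1 D0, hsymm D2 D0, hsymm D2 D1,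
        h01, h12, h02]
      ring
    linarith
  have hab : B a b = 0 := by
    simp only [ha, hb, map_add, LinearMap.add_apply]
    rw [h04, h05, h14, h15, h24, h25]
    ring
  have hbb : B b b = 0 := by
    simp only [hb, map_add, LinearMap.add_apply]
    rw [h44, h55, h45, hsymm D5 D4, h45]
    ring
  have hb3 : B b D3 = 1 := by
    simp only [hb, map_add, LinearMap.add_apply]
    rw [hsymm D4 D3, h34, hsymm D5 D3, h35]
    ring
  have hbne : b ≠ 0 := by
    intro h
    rw [h] at hb3
    simp at hb3
  have := hodge a haa b hbne hab
  linarith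
end
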